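/- Let k = 2, T = 2π, ψ(t, (x₁, x₂)) = (−x₂, x₁) (so that Ω(t, 0, ξ) = e^{tA} ξ is the counterclockwise rotation of ξ by angle t, where A is the matrix with rows (0, −1) and (1, 0)), and let φ(t, (x₁, x₂)) = (0, f(t, −x₁, x₂)) where f : ℝ × ℝ × ℝ → ℝ is continuous and 2π-periodic in its first variable. For a, θ ∈ ℝ set ξ(a, θ) = (−a cos θ, a sin θ). Then for every s ∈ ℝ: η(2π, s, ξ(a,θ)) − η(0, s, ξ(a,θ)) = R(θ) H(a, θ), where R(θ) is the matrix with rows (cos θ, sin θ) and (−sin θ, cos θ), and H(a, θ) = ∫₀^{2π} ( sin τ · f(τ+θ, a cos τ, −a sin τ), cos τ · f(τ+θ, a cos τ, −a sin τ) ) dτ. In particular the left-hand side does not depend on s. -/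

import Mathlib

open Set Metric

/-- The point of `ℝ²` with polar-type coordinates `ξ(a,θ) = (-a cos θ, a sin θ)`. -/
noncomputable def xiFun (a θ : ℝ) : EuclideanSpace ℝ (Fin 2) :=
  WithLp.toLp 2 ![-(a * Real.cos θ), a * Real.sin θ]

/-- The matrix with rows `(cos θ, sin θ)` and `(-sin θ, cos θ)` acting on `ℝ²`. -/
noncomputable def rotMat (θ : ℝ) (v : EuclideanSpace ℝ (Fin 2)) : EuclideanSpace ℝ (Fin 2) :=
  WithLp.toLp 2 ![Real.cos θ * v 0 + Real.sin θ * v 1, -Real.sin θ * v 0 + Real.cos θ * v 1]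

/-- `H(a,θ) = ∫₀^{2π} (sin τ · f(τ+θ, a cos τ, -a sin τ), cos τ · f(τ+θ, a cos τ, -a sin τ)) dτ`. -/
noncomputable def Hfun (f : ℝ → ℝ → ℝ → ℝ) (a θ : ℝ) : EuclideanSpace ℝ (Fin 2) :=
  ∫ τ in (0 : ℝ)..(2 * Real.pi),
    (WithLp.toLp 2 ![Real.sin τ * f (τ + θ) (a * Real.cos τ) (-(a * Real.sin τ)),
       Real.cos τ * f (τ + θ) (a * Real.cos τ) (-(a * Real.sin τ))] :
      EuclideanSpace ℝ (Fin 2))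

/-- The linear map `(x₁,x₂) ↦ (-x₂,x₁)` as a continuous linear map on `ℝ²`. -/
noncomputable def Aclm : EuclideanSpace ℝ (Fin 2) →L[ℝ] EuclideanSpace ℝ (Fin 2) :=
  LinearMap.toContinuousLinearMap
    { toFun := fun v => WithLp.toLp 2 ![-(v 1), v 0]
      map_add' := by
        intro x y; apply WithLp.ofLp_injective; funext i; fin_cases i <;>
          simp [PiLp.add_apply] <;> ring
      map_smul' := by
        intro c x; apply WithLp.ofLp_injective; funext i; fin_cases i <;>
          simp [PiLp.smul_apply] }

lemma Aclm_apply (v : EuclideanSpace ℝ (Fin 2)) : Aclm v = WithLp.toLp 2 ![-(v 1), v 0] := rfl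

/-- For `ψ(t,(x₁,x₂)) = (-x₂,x₁)` (so `Ω(t,0,ξ) = e^{tA} ξ` is rotation by angle `t`) and
`φ(t,(x₁,x₂)) = (0, f(t,-x₁,x₂))` with `f` continuous and `2π`-periodic in time, one has
`η(2π,s,ξ(a,θ)) - η(0,s,ξ(a,θ)) = R(θ) H(a,θ)` for every `s`; in particular the left-hand
side does not depend on `s`. -/
theorem eta_difference_eq_rot_H
    (f : ℝ → ℝ → ℝ → ℝ)
    (hf : Continuous fun p : ℝ × ℝ × ℝ => f p.1 p.2.1 p.2.2)
    (hfT : ∀ t u v, f (t + 2 * Real.pi) u v = f t u v)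
    (φ ψ : ℝ → EuclideanSpace ℝ (Fin 2) → EuclideanSpace ℝ (Fin 2))
    (hψdef : ∀ t v, ψ t v = ![-(v 1), v 0])
    (hφdef : ∀ t v, φ t v = ![0, f t (-(v 0)) (v 1)])
    -- `Ω (·) t₀ ξ` is the solution of `ẋ = ψ(t,x)`, `x(t₀) = ξ`; here the rotation by angle `t`
    (Ω : ℝ → ℝ → EuclideanSpace ℝ (Fin 2) → EuclideanSpace ℝ (Fin 2))
    (hΩ0 : ∀ t₀ ξ, Ω t₀ t₀ ξ = ξ)
    (hΩ' : ∀ t t₀ ξ, HasDerivAt (fun s => Ω s t₀ ξ) (ψ t (Ω t t₀ ξ)) t)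
    (hΩrot : ∀ t ξ, Ω t 0 ξ =
      ![Real.cos t * ξ 0 - Real.sin t * ξ 1, Real.sin t * ξ 0 + Real.cos t * ξ 1])
    -- `η (·) s ξ` is the solution of the linear system (2) with `y(s) = 0`
    (η : ℝ → ℝ → EuclideanSpace ℝ (Fin 2) → EuclideanSpace ℝ (Fin 2))
    (hη0 : ∀ s ξ, η s s ξ = 0)
    (hη : ∀ t s ξ, HasDerivAt (fun u => η u s ξ)
      (φ t (Ω t 0 ξ) + fderiv ℝ (fun x => ψ t x) (Ω t 0 ξ) (η t s ξ)) t) :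
    ∀ (s a θ : ℝ),
      η (2 * Real.pi) s (xiFun a θ) - η 0 s (xiFun a θ) = rotMat θ (Hfun f a θ) := by
  intro s a θ
  set ξ : EuclideanSpace ℝ (Fin 2) := xiFun a θ with hξ
  set G : ℝ → ℝ := fun τ => f (τ + θ) (a * Real.cos τ) (-(a * Real.sin τ)) with hGdef
  have hGcont : Continuous G :=
    hf.comp (show Continuous fun τ : ℝ => ((τ + θ, a * Real.cos τ, -(a * Real.sin τ)) : ℝ × ℝ × ℝ)
      by fun_prop)
  -- fderiv of ψ t is Aclm
  have hψfd : ∀ t p, fderiv ℝ (fun x => ψ t x) p = Aclm := by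
    intro t p
    have h : (fun x => ψ t x) = fun x => Aclm x := by
      funext v; apply WithLp.ofLp_injective; rw [hψdef]; rfl
    rw [h]
    exact Aclm.fderiv
  -- components of ξ
  have hξ0 : ξ 0 = -(a * Real.cos θ) := rfl
  have hξ1 : ξ 1 = a * Real.sin θ := rfl
  -- the value of φ along the flow
  have hφval : ∀ t, f t (-(Ω t 0 ξ 0)) (Ω t 0 ξ 1) = G (t - θ) := by
    intro t
    have h0 : -(Ω t 0 ξ 0) = a * Real.cos (t - θ) := by
      rw [hΩrot]
      simp only [Matrix.cons_val_zero, hξ0, hξ1, Real.cos_sub]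
      ring
    have h1 : Ω t 0 ξ 1 = -(a * Real.sin (t - θ)) := by
      rw [hΩrot]
      simp only [Matrix.cons_val_one, Matrix.head_cons, Matrix.cons_val_zero, hξ0, hξ1, Real.sin_sub]
      ring
    rw [h0, h1, hGdef]
    simp [sub_add_cancel]
  -- component derivative equations
  have hcomp : ∀ (i : Fin 2) (t : ℝ), HasDerivAt (fun u => η u s ξ i)
      ((φ t (Ω t 0 ξ) + Aclm (η t s ξ)) i) t := by
    intro i t
    have h := hη t s ξ
    rw [hψfd] at h
    have := (EuclideanSpace.proj (𝕜 := ℝ) i).hasFDerivAt.comp_hasDerivAt t h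
    exact this
  have hy0 : ∀ t, HasDerivAt (fun u => η u s ξ 0) (-(η t s ξ 1)) t := by
    intro t
    have h := hcomp 0 t
    simpa [hφdef, Aclm_apply, PiLp.add_apply] using h
  have hy1 : ∀ t, HasDerivAt (fun u => η u s ξ 1) (G (t - θ) + η t s ξ 0) t := by
    intro t
    have h := hcomp 1 t
    simpa [hφdef, Aclm_apply, PiLp.add_apply, hφval t] using h
  -- derivative of the rotated components
  have hp : ∀ t, HasDerivAt (fun u => Real.cos u * η u s ξ 0 + Real.sin u * η u s ξ 1)
      (Real.sin t * G (t - θ)) t := by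
    intro t
    have h := ((Real.hasDerivAt_cos t).mul (hy0 t)).add ((Real.hasDerivAt_sin t).mul (hy1 t))
    exact h.congr_deriv (by ring)
  have hq : ∀ t, HasDerivAt (fun u => -Real.sin u * η u s ξ 0 + Real.cos u * η u s ξ 1)
      (Real.cos t * G (t - θ)) t := by
    intro t
    have h := (((Real.hasDerivAt_sin t).neg).mul (hy0 t)).add
      ((Real.hasDerivAt_cos t).mul (hy1 t))
    exact h.congr_deriv (by simp only [Pi.neg_apply]; ring)
  -- integrability
  have hGc : Continuous fun t => G (t - θ) := hGcont.comp (continuous_id.sub continuous_const)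
  have hint0 : IntervalIntegrable (fun t => Real.sin t * G (t - θ))
      MeasureTheory.volume 0 (2 * Real.pi) :=
    (Real.continuous_sin.mul hGc).intervalIntegrable _ _
  have hint1 : IntervalIntegrable (fun t => Real.cos t * G (t - θ))
      MeasureTheory.volume 0 (2 * Real.pi) :=
    (Real.continuous_cos.mul hGc).intervalIntegrable _ _
  -- FTC
  have e0 : (∫ t in (0:ℝ)..2 * Real.pi, Real.sin t * G (t - θ))
      = η (2 * Real.pi) s ξ 0 - η 0 s ξ 0 := by
    rw [intervalIntegral.integral_eq_sub_of_hasDerivAt (fun t _ => hp t) hint0]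
    simp
  have e1 : (∫ t in (0:ℝ)..2 * Real.pi, Real.cos t * G (t - θ))
      = η (2 * Real.pi) s ξ 1 - η 0 s ξ 1 := by
    rw [intervalIntegral.integral_eq_sub_of_hasDerivAt (fun t _ => hq t) hint1]
    simp
  -- shift of variable: t = τ + θ
  have shift : ∀ w : ℝ → ℝ, (∫ t in (0:ℝ)..2 * Real.pi, w t * G (t - θ))
      = ∫ τ in (-θ)..(2 * Real.pi + -θ), w (τ + θ) * G τ := by
    intro w
    have h := intervalIntegral.integral_comp_add_right (a := 0) (b := 2 * Real.pi)
      (fun τ => w (τ + θ) * G τ) (-θ)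
    simp only [neg_add_cancel_right, zero_add] at h
    rw [← h]
    simp only [sub_eq_add_neg]
  -- periodicity of the shifted integrands
  have hGper : ∀ x, G (x + 2 * Real.pi) = G x := by
    intro x
    rw [hGdef]
    simp only
    rw [show x + 2 * Real.pi + θ = (x + θ) + 2 * Real.pi by ring, hfT,
      Real.cos_add_two_pi, Real.sin_add_two_pi]
  have hperS : Function.Periodic (fun τ => Real.sin (τ + θ) * G τ) (2 * Real.pi) := by
    intro x
    simp only
    rw [show x + 2 * Real.pi + θ = (x + θ) + 2 * Real.pi by ring, Real.sin_add_two_pi, hGper]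
  have hperC : Function.Periodic (fun τ => Real.cos (τ + θ) * G τ) (2 * Real.pi) := by
    intro x
    simp only
    rw [show x + 2 * Real.pi + θ = (x + θ) + 2 * Real.pi by ring, Real.cos_add_two_pi, hGper]
  have perS := hperS.intervalIntegral_add_eq (-θ) 0
  have perC := hperC.intervalIntegral_add_eq (-θ) 0
  rw [zero_add] at perS perC
  -- scalar integrals of the H components
  have hintS : IntervalIntegrable (fun τ => Real.sin τ * G τ)
      MeasureTheory.volume 0 (2 * Real.pi) :=
    (Real.continuous_sin.mul hGcont).intervalIntegrable _ _
  have hintC : IntervalIntegrable (fun τ => Real.cos τ * G τ)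
      MeasureTheory.volume 0 (2 * Real.pi) :=
    (Real.continuous_cos.mul hGcont).intervalIntegrable _ _
  -- expand sin(τ+θ), cos(τ+θ)
  have expS : (∫ τ in (0:ℝ)..2 * Real.pi, Real.sin (τ + θ) * G τ)
      = Real.cos θ * (∫ τ in (0:ℝ)..2 * Real.pi, Real.sin τ * G τ)
        + Real.sin θ * (∫ τ in (0:ℝ)..2 * Real.pi, Real.cos τ * G τ) := by
    rw [← intervalIntegral.integral_const_mul, ← intervalIntegral.integral_const_mul,
      ← intervalIntegral.integral_add (hintS.const_mul _) (hintC.const_mul _)]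
    congr 1
    funext τ
    rw [Real.sin_add]
    ring
  have expC : (∫ τ in (0:ℝ)..2 * Real.pi, Real.cos (τ + θ) * G τ)
      = -Real.sin θ * (∫ τ in (0:ℝ)..2 * Real.pi, Real.sin τ * G τ)
        + Real.cos θ * (∫ τ in (0:ℝ)..2 * Real.pi, Real.cos τ * G τ) := by
    rw [← intervalIntegral.integral_const_mul, ← intervalIntegral.integral_const_mul,
      ← intervalIntegral.integral_add (hintS.const_mul _) (hintC.const_mul _)]
    congr 1
    funext τ
    rw [Real.cos_add]
    ring
  -- components of Hfun
  set V : ℝ → EuclideanSpace ℝ (Fin 2) :=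
      fun τ => WithLp.toLp 2 ![Real.sin τ * G τ, Real.cos τ * G τ] with hV
  have hveccont : Continuous V := by
    have h1 : Continuous fun τ : ℝ => (![Real.sin τ * G τ, Real.cos τ * G τ] : Fin 2 → ℝ) := by
      refine continuous_pi fun i => ?_
      fin_cases i <;> simp <;> fun_prop
    exact ((EuclideanSpace.equiv (Fin 2) ℝ).symm.continuous).comp h1
  have hvecint : IntervalIntegrable V MeasureTheory.volume 0 (2 * Real.pi) :=
    hveccont.intervalIntegrable _ _
  have hHfun : Hfun f a θ = ∫ τ in (0:ℝ)..2 * Real.pi, V τ := by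
    rw [Hfun, hV, hGdef]
  have hH0 : Hfun f a θ 0 = ∫ τ in (0:ℝ)..2 * Real.pi, Real.sin τ * G τ := by
    have h := (EuclideanSpace.proj (𝕜 := ℝ) (0 : Fin 2)).intervalIntegral_comp_comm hvecint
    rw [hHfun]
    simpa [hV, PiLp.proj_apply] using h.symm
  have hH1 : Hfun f a θ 1 = ∫ τ in (0:ℝ)..2 * Real.pi, Real.cos τ * G τ := by
    have h := (EuclideanSpace.proj (𝕜 := ℝ) (1 : Fin 2)).intervalIntegral_comp_comm hvecint
    rw [hHfun]
    simpa [hV, PiLp.proj_apply] using h.symm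
  -- assemble
  have keyS : η (2 * Real.pi) s ξ 0 - η 0 s ξ 0
      = Real.cos θ * Hfun f a θ 0 + Real.sin θ * Hfun f a θ 1 := by
    rw [hH0, hH1, ← expS, ← e0, shift Real.sin, show (2 * Real.pi + -θ) = -θ + 2 * Real.pi by ring,
      perS]
  have keyC : η (2 * Real.pi) s ξ 1 - η 0 s ξ 1
      = -Real.sin θ * Hfun f a θ 0 + Real.cos θ * Hfun f a θ 1 := by
    rw [hH0, hH1, ← expC, ← e1, shift Real.cos, show (2 * Real.pi + -θ) = -θ + 2 * Real.pi by ring,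
      perC]
  apply WithLp.ofLp_injective
  funext i
  fin_cases i
  · simpa [rotMat, PiLp.sub_apply] using keyS
  · simpa [rotMat, PiLp.sub_apply] using keyC
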